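/- arXiv:1804.01629 — 5 statements merged into one kernel-verified Lean document; each statement's English description precedes it below -/
import Mathlib

section
/- Let \mathcal{M} be a finite set of positive integers of cardinality at most N, and suppose \mathcal{P} is a set of k distinct primes none of which divides any element of \mathcal{M}, where 2^k|\mathcal{M}| \le N. Let D be the product of the primes in \mathcal{P} and \mathcal{M}'' := \{dm : d \mid D, m \in \mathcal{M}\}. Then |\mathcal{M}''| = 2^k |\mathcal{M}| and S(\mathcal{M}'') \ge |\mathcal{M}''| \cdot S(\mathcal{M})/|\mathcal{M}|, where S(\mathcal{A}) := \sum_{m,n \in \mathcal{A}} \sqrt{\gcd(m,n)/\mathrm{lcm}(m,n)}. -/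
open Finset

noncomputable def galSum (A : Finset ℕ) : ℝ :=
  ∑ m ∈ A, ∑ n ∈ A, Real.sqrt ((Nat.gcd m n : ℝ) / (Nat.lcm m n : ℝ))

lemma card_divisors_prod_primes : ∀ (P : Finset ℕ), (∀ p ∈ P, Nat.Prime p) →
    (∏ p ∈ P, p).divisors.card = 2 ^ P.card := by
  intro P
  induction P using Finset.induction_on with
  | empty => intro _; simp
  | @insert a s ha ih =>
    intro hins
    have hap : Nat.Prime a := hins a (mem_insert_self a s)
    have hs : ∀ p ∈ s, Nat.Prime p := fun p hp => hins p (mem_insert_of_mem hp)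
    have hcop : Nat.Coprime a (∏ p ∈ s, p) := by
      apply Nat.Coprime.prod_right
      intro p hp
      exact (Nat.coprime_primes hap (hs p hp)).mpr (fun h => ha (h ▸ hp))
    rw [Finset.prod_insert ha, Nat.Coprime.card_divisors_mul hcop, hap.divisors,
      Finset.card_insert_of_notMem ha, ih hs]
    have : ({1, a} : Finset ℕ).card = 2 := by
      rw [Finset.card_insert_of_notMem (by simp [hap.ne_one.symm]), Finset.card_singleton]
    rw [this, pow_succ, mul_comm]

theorem stmt_0 (N k : ℕ) (M P : Finset ℕ)
    (hMpos : ∀ m ∈ M, 0 < m)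
    (hMN : M.card ≤ N)
    (hP : ∀ p ∈ P, Nat.Prime p)
    (hPk : P.card = k)
    (hPnd : ∀ p ∈ P, ∀ m ∈ M, ¬ p ∣ m)
    (hk : 2 ^ k * M.card ≤ N)
    (D : ℕ) (hD : D = ∏ p ∈ P, p)
    (M'' : Finset ℕ) (hM'' : M'' = (D.divisors ×ˢ M).image (fun x => x.1 * x.2)) :
    M''.card = 2 ^ k * M.card ∧
      (M.card : ℝ) * galSum M'' ≥ (M''.card : ℝ) * galSum M := by
  have hDpos : 0 < D := by
    rw [hD]; exact Finset.prod_pos (fun p hp => (hP p hp).pos)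
  have hcard_div : D.divisors.card = 2 ^ k := by
    rw [hD, card_divisors_prod_primes P hP, hPk]
  -- coprimality of each m ∈ M with D
  have hcop : ∀ m ∈ M, Nat.Coprime m D := by
    intro m hm
    rw [hD]
    apply Nat.Coprime.prod_right
    intro p hp
    exact ((hP p hp).coprime_iff_not_dvd.mpr (hPnd p hp m hm)).symm
  -- injectivity of (d, m) ↦ d * m on D.divisors ×ˢ M
  have hinj : ∀ d ∈ D.divisors, ∀ m ∈ M, ∀ d' ∈ D.divisors, ∀ m' ∈ M,
      d * m = d' * m' → d = d' ∧ m = m' := by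
    intro d hd m hm d' hd' m' hm' heq
    have hdD : d ∣ D := (Nat.mem_divisors.mp hd).1
    have hd'D : d' ∣ D := (Nat.mem_divisors.mp hd').1
    have h1 : Nat.gcd (d * m) D = d := by
      rw [Nat.Coprime.gcd_mul_right_cancel d (hcop m hm), Nat.gcd_eq_left hdD]
    have h2 : Nat.gcd (d' * m') D = d' := by
      rw [Nat.Coprime.gcd_mul_right_cancel d' (hcop m' hm'), Nat.gcd_eq_left hd'D]
    have hdd : d = d' := by rw [← h1, ← h2, heq]
    have hdpos : 0 < d := Nat.pos_of_dvd_of_pos hdD hDpos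
    refine ⟨hdd, ?_⟩
    rw [hdd] at heq
    exact Nat.eq_of_mul_eq_mul_left (hdd ▸ hdpos) heq
  have hcard : M''.card = 2 ^ k * M.card := by
    rw [hM'', Finset.card_image_of_injOn, Finset.card_product, hcard_div]
    intro x hx y hy hxy
    simp only [Finset.coe_product, Set.mem_prod, Finset.mem_coe] at hx hy
    obtain ⟨h1, h2⟩ := hinj x.1 hx.1 x.2 hx.2 y.1 hy.1 y.2 hy.2 hxy
    exact Prod.ext h1 h2
  refine ⟨hcard, ?_⟩
  -- the sum inequality
  set f : ℕ × ℕ → ℝ := fun x => Real.sqrt ((Nat.gcd x.1 x.2 : ℝ) / (Nat.lcm x.1 x.2 : ℝ)) with hf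
  have hgal : ∀ A : Finset ℕ, galSum A = ∑ x ∈ A ×ˢ A, f x := by
    intro A; rw [galSum, Finset.sum_product]
  set T : Finset (ℕ × ℕ) :=
    (D.divisors ×ˢ (M ×ˢ M)).image (fun x => (x.1 * x.2.1, x.1 * x.2.2)) with hT
  have hTsub : T ⊆ M'' ×ˢ M'' := by
    intro x hx
    simp only [hT, Finset.mem_image, Finset.mem_product] at hx
    obtain ⟨⟨d, m, n⟩, ⟨hd, hm, hn⟩, rfl⟩ := hx
    simp only [Finset.mem_product, hM'', Finset.mem_image]
    exact ⟨⟨(d, m), ⟨hd, hm⟩, rfl⟩, ⟨(d, n), ⟨hd, hn⟩, rfl⟩⟩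
  have hfnonneg : ∀ x : ℕ × ℕ, 0 ≤ f x := fun x => Real.sqrt_nonneg _
  have hsumT : ∑ x ∈ T, f x = (2 ^ k : ℝ) * galSum M := by
    rw [hT, Finset.sum_image]
    · rw [Finset.sum_product]
      have : ∀ d ∈ D.divisors,
          ∑ x ∈ M ×ˢ M, f (d * x.1, d * x.2) = galSum M := by
        intro d hd
        have hdpos : 0 < d := Nat.pos_of_dvd_of_pos (Nat.mem_divisors.mp hd).1 hDpos
        rw [hgal]
        apply Finset.sum_congr rfl
        intro x _
        simp only [hf, Nat.gcd_mul_left, Nat.lcm_mul_left]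
        congr 1
        push_cast
        rw [mul_div_mul_left]
        exact_mod_cast hdpos.ne'
      rw [Finset.sum_congr rfl this, Finset.sum_const, hcard_div, nsmul_eq_mul]
      push_cast
      ring
    · intro x hx y hy hxy
      simp only [Finset.mem_coe, Finset.mem_product] at hx hy
      simp only [Prod.mk.injEq] at hxy
      obtain ⟨h1, h2⟩ := hinj x.1 hx.1 x.2.1 hx.2.1 y.1 hy.1 y.2.1 hy.2.1 hxy.1
      obtain ⟨_, h3⟩ := hinj x.1 hx.1 x.2.2 hx.2.2 y.1 hy.1 y.2.2 hy.2.2 hxy.2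
      exact Prod.ext h1 (Prod.ext h2 h3)
  have hle : (2 ^ k : ℝ) * galSum M ≤ galSum M'' := by
    rw [← hsumT, hgal]
    exact Finset.sum_le_sum_of_subset_of_nonneg hTsub (fun x _ _ => hfnonneg x)
  rw [ge_iff_le, hcard]
  push_cast
  calc (2 : ℝ) ^ k * M.card * galSum M = M.card * ((2 : ℝ) ^ k * galSum M) := by ring
    _ ≤ M.card * galSum M'' := by
        apply mul_le_mul_of_nonneg_left hle (Nat.cast_nonneg _)
end

section
/- For every prime p and all integers r, s with 0 \le r \le s, and all strictly increasing sequences of nonnegative integers \nu_0 < \nu_1 < \dots < \nu_r and \mu_0 < \mu_1 < \dots < \mu_s, the sum \sigma := \sum_{0 \le \alpha \le r} \sum_{0 \le \beta \le s} p^{-|\nu_\alpha - \mu_\beta|/2} satisfies \sigma \le r + 1 + (2r+2)/(\sqrt{p}-1). -/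
open Finset

theorem stmt_8 (p : ℕ) (hp : Nat.Prime p) (r s : ℕ) (hrs : r ≤ s)
    (ν μ : ℕ → ℕ)
    (hν : ∀ i, i < r → ν i < ν (i + 1))
    (hμ : ∀ i, i < s → μ i < μ (i + 1)) :
    ∑ α ∈ Finset.range (r + 1), ∑ β ∈ Finset.range (s + 1),
        (p : ℝ) ^ (-((((ν α : ℤ) - (μ β : ℤ)).natAbs : ℝ)) / 2) ≤
      (r : ℝ) + 1 + (2 * r + 2) / (Real.sqrt p - 1) := by
  have hp1 : (1 : ℝ) < p := by exact_mod_cast hp.one_lt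
  have hp0 : (0 : ℝ) ≤ p := by positivity
  have hs1 : 1 < Real.sqrt p := by
    have := Real.sqrt_lt_sqrt (by norm_num) hp1
    simpa using this
  set x : ℝ := (Real.sqrt p)⁻¹ with hxdef
  have hx0 : 0 ≤ x := inv_nonneg.2 (Real.sqrt_nonneg _)
  have hx1 : x < 1 := inv_lt_one_of_one_lt₀ hs1
  have hsum : Summable fun k : ℕ => x ^ k := summable_geometric_of_lt_one hx0 hx1
  have htsum : ∑' k : ℕ, x ^ k = (1 - x)⁻¹ := tsum_geometric_of_lt_one hx0 hx1
  -- term rewriting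
  have hterm : ∀ k : ℕ, (p : ℝ) ^ (-(k : ℝ) / 2) = x ^ k := by
    intro k
    rw [hxdef, Real.sqrt_eq_rpow, ← Real.rpow_neg hp0,
      ← Real.rpow_natCast ((p : ℝ) ^ (-(1 / 2 : ℝ))) k, ← Real.rpow_mul hp0]
    ring_nf
  -- strict monotonicity of μ on [0, s]
  have hμlt : ∀ i j, i < j → j ≤ s → μ i < μ j := by
    intro i j hij hjs
    induction j with
    | zero => omega
    | succ n ih =>
      rcases Nat.lt_succ_iff_lt_or_eq.mp hij with h | h
      · exact (ih h (by omega)).trans (hμ n (by omega))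
      · subst h; exact hμ i (by omega)
  have hμinj : ∀ i j, i ≤ s → j ≤ s → μ i = μ j → i = j := by
    intro i j hi hj h
    rcases lt_trichotomy i j with h' | h' | h'
    · exact absurd h (Nat.ne_of_lt (hμlt i j h' hj))
    · exact h'
    · exact absurd h.symm (Nat.ne_of_lt (hμlt j i h' hi))
  -- key per-row bound
  have key : ∀ a : ℕ, ∑ β ∈ Finset.range (s + 1), x ^ ((a : ℤ) - (μ β : ℤ)).natAbs ≤
      (1 - x)⁻¹ + x * (1 - x)⁻¹ := by
    intro a
    rw [← Finset.sum_filter_add_sum_filter_not (Finset.range (s + 1)) (fun β => μ β ≤ a)]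
    have h1 : ∑ β ∈ (Finset.range (s + 1)).filter (fun β => μ β ≤ a),
        x ^ ((a : ℤ) - (μ β : ℤ)).natAbs ≤ (1 - x)⁻¹ := by
      have hrw : ∑ β ∈ (Finset.range (s + 1)).filter (fun β => μ β ≤ a),
          x ^ ((a : ℤ) - (μ β : ℤ)).natAbs
          = ∑ β ∈ (Finset.range (s + 1)).filter (fun β => μ β ≤ a), x ^ (a - μ β) := by
        apply Finset.sum_congr rfl
        intro β hβ
        simp only [Finset.mem_filter] at hβ
        congr 1
        omega
      rw [hrw]
      have hinj : ∀ b1 ∈ (Finset.range (s + 1)).filter (fun β => μ β ≤ a),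
          ∀ b2 ∈ (Finset.range (s + 1)).filter (fun β => μ β ≤ a),
          a - μ b1 = a - μ b2 → b1 = b2 := by
        intro b1 h1 b2 h2 h
        simp only [Finset.mem_filter, Finset.mem_range] at h1 h2
        exact hμinj b1 b2 (by omega) (by omega) (by omega)
      rw [← Finset.sum_image (f := fun k : ℕ => x ^ k) hinj]
      exact sum_le_hasSum _ (fun k _ => by positivity)
        (hasSum_geometric_of_lt_one hx0 hx1)
    have h2 : ∑ β ∈ (Finset.range (s + 1)).filter (fun β => ¬ μ β ≤ a),
        x ^ ((a : ℤ) - (μ β : ℤ)).natAbs ≤ x * (1 - x)⁻¹ := by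
      have hrw : ∑ β ∈ (Finset.range (s + 1)).filter (fun β => ¬ μ β ≤ a),
          x ^ ((a : ℤ) - (μ β : ℤ)).natAbs
          = ∑ β ∈ (Finset.range (s + 1)).filter (fun β => ¬ μ β ≤ a),
            x * x ^ (μ β - a - 1) := by
        apply Finset.sum_congr rfl
        intro β hβ
        simp only [Finset.mem_filter] at hβ
        have : ((a : ℤ) - (μ β : ℤ)).natAbs = (μ β - a - 1) + 1 := by omega
        rw [this, pow_succ]
        ring
      rw [hrw, ← Finset.mul_sum]
      have hinj : ∀ b1 ∈ (Finset.range (s + 1)).filter (fun β => ¬ μ β ≤ a),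
          ∀ b2 ∈ (Finset.range (s + 1)).filter (fun β => ¬ μ β ≤ a),
          μ b1 - a - 1 = μ b2 - a - 1 → b1 = b2 := by
        intro b1 h1 b2 h2 h
        simp only [Finset.mem_filter, Finset.mem_range] at h1 h2
        exact hμinj b1 b2 (by omega) (by omega) (by omega)
      have hle : ∑ β ∈ (Finset.range (s + 1)).filter (fun β => ¬ μ β ≤ a),
          x ^ (μ β - a - 1) ≤ (1 - x)⁻¹ := by
        rw [← Finset.sum_image (f := fun k : ℕ => x ^ k) hinj]
        exact sum_le_hasSum _ (fun k _ => by positivity)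
          (hasSum_geometric_of_lt_one hx0 hx1)
      exact mul_le_mul_of_nonneg_left hle hx0
    linarith
  -- put it together
  have hmain : ∑ α ∈ Finset.range (r + 1), ∑ β ∈ Finset.range (s + 1),
      (p : ℝ) ^ (-((((ν α : ℤ) - (μ β : ℤ)).natAbs : ℝ)) / 2)
      ≤ (r + 1) * ((1 - x)⁻¹ + x * (1 - x)⁻¹) := by
    calc ∑ α ∈ Finset.range (r + 1), ∑ β ∈ Finset.range (s + 1),
        (p : ℝ) ^ (-((((ν α : ℤ) - (μ β : ℤ)).natAbs : ℝ)) / 2)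
        = ∑ α ∈ Finset.range (r + 1), ∑ β ∈ Finset.range (s + 1),
            x ^ ((ν α : ℤ) - (μ β : ℤ)).natAbs := by
          apply Finset.sum_congr rfl; intro α _
          apply Finset.sum_congr rfl; intro β _
          exact hterm _
      _ ≤ ∑ _α ∈ Finset.range (r + 1), ((1 - x)⁻¹ + x * (1 - x)⁻¹) :=
          Finset.sum_le_sum (fun α _ => key (ν α))
      _ = (r + 1) * ((1 - x)⁻¹ + x * (1 - x)⁻¹) := by
          rw [Finset.sum_const, Finset.card_range]; push_cast; ring
  refine hmain.trans (le_of_eq ?_)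
  have hq0 : Real.sqrt p ≠ 0 := by positivity
  have hq1 : Real.sqrt p - 1 ≠ 0 := by nlinarith
  have hx1' : 1 - x ≠ 0 := by nlinarith
  rw [hxdef]
  field_simp
  ring
end

section
/- Let D be a positive integer and \alpha > 0. Let \mathcal{T}_D be the set of divisors of D. Then \sum_{m,n \mid D} (\gcd(m,n)/\mathrm{lcm}(m,n))^\alpha = \tau(D) \prod_{p^{\mu} \| D} \left(1 + \frac{2\mu}{(1+\mu) p^\alpha} \sum_{0 \le k < \mu} \frac{1 - k/\mu}{p^{k\alpha}}\right), where \tau(D) is the number of divisors of D and the product is over prime powers p^\mu exactly dividing D. -/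
open Finset

lemma gcd_mul_gcd_of_dvd' {M N d : ℕ} (h : M.Coprime N) (hd : d ∣ M * N) :
    d.gcd M * d.gcd N = d := by
  apply Nat.dvd_antisymm
  · exact ((h.coprime_dvd_left (Nat.gcd_dvd_right d M)).coprime_dvd_right
      (Nat.gcd_dvd_right d N)).mul_dvd_of_dvd_of_dvd (Nat.gcd_dvd_left _ _) (Nat.gcd_dvd_left _ _)
  · exact Nat.dvd_gcd_mul_gcd_iff_dvd_mul.mpr hd

lemma gcd_mul_split' {M N a b c e : ℕ} (h : M.Coprime N) (ha : a ∣ M) (hb : b ∣ N)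
    (hc : c ∣ M) (he : e ∣ N) : Nat.gcd (a * b) (c * e) = Nat.gcd a c * Nat.gcd b e := by
  apply Nat.dvd_antisymm
  · set d := Nat.gcd (a * b) (c * e) with hdef
    have hdMN : d ∣ M * N := (Nat.gcd_dvd_left _ _).trans (mul_dvd_mul ha hb)
    have hdM : d.gcd M ∣ M := Nat.gcd_dvd_right d M
    have hdN : d.gcd N ∣ N := Nat.gcd_dvd_right d N
    have h1 : d.gcd M ∣ Nat.gcd a c := by
      refine Nat.dvd_gcd ?_ ?_
      · exact ((h.coprime_dvd_left hdM).coprime_dvd_right hb).dvd_of_dvd_mul_right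
          ((Nat.gcd_dvd_left d M).trans (Nat.gcd_dvd_left _ _))
      · exact ((h.coprime_dvd_left hdM).coprime_dvd_right he).dvd_of_dvd_mul_right
          ((Nat.gcd_dvd_left d M).trans (Nat.gcd_dvd_right _ _))
    have h2 : d.gcd N ∣ Nat.gcd b e := by
      refine Nat.dvd_gcd ?_ ?_
      · exact ((h.symm.coprime_dvd_left hdN).coprime_dvd_right ha).dvd_of_dvd_mul_left
          ((Nat.gcd_dvd_left d N).trans (Nat.gcd_dvd_left _ _))
      · exact ((h.symm.coprime_dvd_left hdN).coprime_dvd_right hc).dvd_of_dvd_mul_left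
          ((Nat.gcd_dvd_left d N).trans (Nat.gcd_dvd_right _ _))
    calc d = d.gcd M * d.gcd N := (gcd_mul_gcd_of_dvd' h hdMN).symm
    _ ∣ Nat.gcd a c * Nat.gcd b e := mul_dvd_mul h1 h2
  · exact Nat.dvd_gcd (mul_dvd_mul (Nat.gcd_dvd_left a c) (Nat.gcd_dvd_left b e))
      (mul_dvd_mul (Nat.gcd_dvd_right a c) (Nat.gcd_dvd_right b e))

lemma sum_divisors_coprime' {M N : ℕ} (hM : M ≠ 0) (hN : N ≠ 0) (h : M.Coprime N)
    (f : ℕ → ℝ) :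
    ∑ d ∈ (M * N).divisors, f d = ∑ a ∈ M.divisors, ∑ b ∈ N.divisors, f (a * b) := by
  rw [← Finset.sum_product']
  refine (Finset.sum_nbij' (i := fun a : ℕ × ℕ => a.1 * a.2)
    (j := fun d => (d.gcd M, d.gcd N)) ?_ ?_ ?_ ?_ ?_).symm
  · rintro ⟨a, b⟩ hab
    simp only [Finset.mem_product, Nat.mem_divisors] at hab ⊢
    exact ⟨mul_dvd_mul hab.1.1 hab.2.1, mul_ne_zero hM hN⟩
  · intro d hd
    simp only [Nat.mem_divisors, Finset.mem_product] at hd ⊢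
    exact ⟨⟨Nat.gcd_dvd_right _ _, hM⟩, ⟨Nat.gcd_dvd_right _ _, hN⟩⟩
  · rintro ⟨a, b⟩ hab
    simp only [Finset.mem_product, Nat.mem_divisors] at hab
    have hcb : Nat.Coprime b M := (h.symm.coprime_dvd_left hab.2.1)
    have hca : Nat.Coprime a N := (h.coprime_dvd_left hab.1.1)
    have h1 : Nat.gcd (a * b) M = a := by
      rw [hcb.gcd_mul_right_cancel a, Nat.gcd_eq_left hab.1.1]
    have h2 : Nat.gcd (a * b) N = b := by
      rw [hca.gcd_mul_left_cancel b, Nat.gcd_eq_left hab.2.1]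
    simp [h1, h2]
  · intro d hd
    simp only [Nat.mem_divisors] at hd
    exact gcd_mul_gcd_of_dvd' h hd.1
  · intro a _
    rfl

noncomputable def Fgl (α : ℝ) (N : ℕ) : ℝ :=
  ∑ m ∈ N.divisors, ∑ n ∈ N.divisors, ((Nat.gcd m n : ℝ) / (Nat.lcm m n : ℝ)) ^ α

lemma term_eq' {m n : ℕ} (hm : 0 < m) (hn : 0 < n) :
    ((Nat.gcd m n : ℝ) / (Nat.lcm m n : ℝ)) = (Nat.gcd m n : ℝ) ^ 2 / ((m : ℝ) * (n : ℝ)) := by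
  have h : (Nat.gcd m n : ℝ) * (Nat.lcm m n : ℝ) = (m : ℝ) * (n : ℝ) := by
    exact_mod_cast congrArg (Nat.cast (R := ℝ)) (Nat.gcd_mul_lcm m n)
  have hl : (0 : ℝ) < (Nat.lcm m n : ℝ) := by
    exact_mod_cast Nat.pos_of_ne_zero (Nat.lcm_ne_zero hm.ne' hn.ne')
  rw [div_eq_div_iff hl.ne' (by positivity : ((m : ℝ) * n) ≠ 0)]
  linear_combination (-(Nat.gcd m n : ℝ)) * h

lemma Fgl_one (α : ℝ) : Fgl α 1 = 1 := by simp [Fgl]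

lemma Fgl_mult (α : ℝ) (M N : ℕ) (h : M.Coprime N) : Fgl α (M * N) = Fgl α M * Fgl α N := by
  rcases eq_or_ne M 0 with rfl | hM
  · rcases Nat.coprime_zero_left N |>.mp h with rfl
    simp [Fgl]
  rcases eq_or_ne N 0 with rfl | hN
  · rcases Nat.coprime_zero_right M |>.mp h with rfl
    simp [Fgl]
  unfold Fgl
  rw [sum_divisors_coprime' hM hN h]
  have inner : ∀ a ∈ M.divisors, ∀ b ∈ N.divisors,
      ∑ n ∈ (M * N).divisors, ((Nat.gcd (a * b) n : ℝ) / (Nat.lcm (a * b) n : ℝ)) ^ α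
        = (∑ c ∈ M.divisors, ((Nat.gcd a c : ℝ) / (Nat.lcm a c : ℝ)) ^ α) *
          (∑ e ∈ N.divisors, ((Nat.gcd b e : ℝ) / (Nat.lcm b e : ℝ)) ^ α) := by
    intro a ha b hb
    rw [Nat.mem_divisors] at ha hb
    rw [sum_divisors_coprime' hM hN h, Finset.sum_mul_sum]
    refine Finset.sum_congr rfl fun c hc => Finset.sum_congr rfl fun e he => ?_
    rw [Nat.mem_divisors] at hc he
    have hapos := Nat.pos_of_dvd_of_pos ha.1 (Nat.pos_of_ne_zero hM)
    have hbpos := Nat.pos_of_dvd_of_pos hb.1 (Nat.pos_of_ne_zero hN)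
    have hcpos := Nat.pos_of_dvd_of_pos hc.1 (Nat.pos_of_ne_zero hM)
    have hepos := Nat.pos_of_dvd_of_pos he.1 (Nat.pos_of_ne_zero hN)
    rw [term_eq' (by positivity) (by positivity), term_eq' hapos hcpos, term_eq' hbpos hepos,
      gcd_mul_split' h ha.1 hb.1 hc.1 he.1]
    push_cast
    rw [← Real.mul_rpow (by positivity) (by positivity)]
    congr 1
    field_simp
  calc ∑ a ∈ M.divisors, ∑ b ∈ N.divisors,
      ∑ n ∈ (M * N).divisors, ((Nat.gcd (a * b) n : ℝ) / (Nat.lcm (a * b) n : ℝ)) ^ α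
      = ∑ a ∈ M.divisors, ∑ b ∈ N.divisors,
        (∑ c ∈ M.divisors, ((Nat.gcd a c : ℝ) / (Nat.lcm a c : ℝ)) ^ α) *
        (∑ e ∈ N.divisors, ((Nat.gcd b e : ℝ) / (Nat.lcm b e : ℝ)) ^ α) := by
        refine Finset.sum_congr rfl fun a ha => Finset.sum_congr rfl fun b hb => inner a ha b hb
    _ = _ := by rw [← Finset.sum_mul_sum]

lemma key' (x : ℝ) (μ : ℕ) :
    ∑ i ∈ range (μ+1), ∑ j ∈ range (μ+1), x ^ (max i j - min i j)
      = ((μ : ℝ) + 1) + 2 * ∑ d ∈ range μ, ((μ : ℝ) - d) * x ^ (d+1) := by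
  induction μ with
  | zero => simp
  | succ μ ih =>
    have hrow : ∀ i ∈ range (μ+1), ∑ j ∈ range (μ+1+1), x ^ (max i j - min i j)
        = (∑ j ∈ range (μ+1), x ^ (max i j - min i j)) + x ^ (μ+1-i) := by
      intro i hi
      rw [mem_range] at hi
      rw [Finset.sum_range_succ]
      congr 2
      rw [max_eq_right (by omega), min_eq_left (by omega)]
    have hlast : ∑ j ∈ range (μ+1+1), x ^ (max (μ+1) j - min (μ+1) j)
        = (∑ j ∈ range (μ+1), x ^ (μ+1-j)) + 1 := by
      rw [Finset.sum_range_succ]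
      congr 1
      · refine Finset.sum_congr rfl fun j hj => ?_
        rw [mem_range] at hj
        rw [max_eq_left (by omega), min_eq_right (by omega)]
      · simp
    have hreflect : ∑ j ∈ range (μ+1), x ^ (μ+1-j) = ∑ d ∈ range (μ+1), x ^ (d+1) := by
      rw [← Finset.sum_range_reflect (fun d => x ^ (d+1)) (μ+1)]
      refine Finset.sum_congr rfl fun j hj => ?_
      rw [mem_range] at hj
      congr 1
      omega
    have hR : ∑ d ∈ range (μ+1), (((μ:ℝ)+1) - d) * x ^ (d+1)
        = (∑ d ∈ range μ, ((μ:ℝ) - d) * x ^ (d+1)) + ∑ d ∈ range (μ+1), x ^ (d+1) := by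
      calc ∑ d ∈ range (μ+1), (((μ:ℝ)+1) - d) * x ^ (d+1)
          = ∑ d ∈ range (μ+1), (((μ:ℝ) - d) * x ^ (d+1) + x ^ (d+1)) := by
            exact Finset.sum_congr rfl fun d _ => by ring
        _ = ∑ d ∈ range (μ+1), ((μ:ℝ) - d) * x ^ (d+1) + ∑ d ∈ range (μ+1), x ^ (d+1) :=
            Finset.sum_add_distrib
        _ = _ := by rw [Finset.sum_range_succ]; simp
    rw [Finset.sum_range_succ, Finset.sum_congr rfl hrow, Finset.sum_add_distrib, ih, hlast,
      hreflect]
    push_cast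
    rw [hR]
    ring

lemma Fgl_prime_pow {p : ℕ} (hp : p.Prime) (μ : ℕ) (α : ℝ) :
    Fgl α (p ^ μ)
      = ((μ : ℝ) + 1) + 2 * ∑ d ∈ range μ, ((μ : ℝ) - d) * ((p : ℝ) ^ (-α)) ^ (d+1) := by
  have hppos : (0:ℝ) < p := by exact_mod_cast hp.pos
  rw [← key' ((p : ℝ) ^ (-α)) μ, Fgl, Nat.sum_divisors_prime_pow hp]
  refine Finset.sum_congr rfl fun i _ => ?_
  rw [Nat.sum_divisors_prime_pow hp]
  refine Finset.sum_congr rfl fun j _ => ?_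
  have hgcd : Nat.gcd (p^i) (p^j) = p ^ (min i j) := by
    rcases le_total i j with h | h
    · rw [Nat.gcd_eq_left (pow_dvd_pow p h), min_eq_left h]
    · rw [Nat.gcd_eq_right (pow_dvd_pow p h), min_eq_right h]
  have hlcm : Nat.lcm (p^i) (p^j) = p ^ (max i j) := by
    rcases le_total i j with h | h
    · rw [max_eq_right h]
      exact Nat.dvd_antisymm (Nat.lcm_dvd (pow_dvd_pow p h) dvd_rfl) (Nat.dvd_lcm_right _ _)
    · rw [max_eq_left h]
      exact Nat.dvd_antisymm (Nat.lcm_dvd dvd_rfl (pow_dvd_pow p h)) (Nat.dvd_lcm_left _ _)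
  rw [hgcd, hlcm]
  push_cast
  rw [← Real.rpow_natCast (p:ℝ) (min i j), ← Real.rpow_natCast (p:ℝ) (max i j),
    ← Real.rpow_sub hppos, ← Real.rpow_mul hppos.le,
    ← Real.rpow_natCast ((p:ℝ) ^ (-α)) (max i j - min i j)]
  rw [← Real.rpow_mul hppos.le]
  congr 1
  rw [Nat.cast_sub (min_le_max (a := i) (b := j))]
  ring

lemma rhs_eq' {p : ℕ} (hp : p.Prime) (μ : ℕ) (α : ℝ) :
    ((μ : ℝ) + 1) + 2 * ∑ d ∈ range μ, ((μ : ℝ) - d) * ((p : ℝ) ^ (-α)) ^ (d+1)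
      = ((μ : ℝ) + 1) * (1 + (2 * (μ : ℝ)) / ((1 + (μ : ℝ)) * (p : ℝ) ^ α) *
          ∑ k ∈ range μ, (1 - (k : ℝ) / (μ : ℝ)) / (p : ℝ) ^ ((k : ℝ) * α)) := by
  have hppos : (0:ℝ) < p := by exact_mod_cast hp.pos
  have hpa : (0:ℝ) < (p:ℝ) ^ α := Real.rpow_pos_of_pos hppos α
  have hx : (p:ℝ) ^ (-α) = ((p:ℝ) ^ α)⁻¹ := Real.rpow_neg hppos.le α ▸ rfl
  have hsum : ∀ k : ℕ, (1 - (k:ℝ)/μ) / (p:ℝ) ^ ((k:ℝ) * α)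
      = (1 - (k:ℝ)/μ) * ((p:ℝ) ^ (-α)) ^ k := by
    intro k
    rw [div_eq_mul_inv]
    congr 1
    rw [← Real.rpow_natCast ((p:ℝ) ^ (-α)) k, ← Real.rpow_mul hppos.le,
      ← Real.rpow_neg hppos.le]
    congr 1
    ring
  rcases Nat.eq_zero_or_pos μ with rfl | hμ
  · simp
  · have hμR : (0:ℝ) < μ := by exact_mod_cast hμ
    have h2 : ∑ k ∈ range μ, (1 - (k:ℝ)/μ) / (p:ℝ) ^ ((k:ℝ) * α)
        = ∑ k ∈ range μ, (1 - (k:ℝ)/μ) * ((p:ℝ) ^ (-α)) ^ k :=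
      Finset.sum_congr rfl fun k _ => hsum k
    rw [h2]
    simp only [mul_add, mul_one, Finset.mul_sum]
    congr 1
    refine Finset.sum_congr rfl fun k hk => ?_
    rw [pow_succ, hx]
    field_simp
    ring

theorem stmt_9 (D : ℕ) (hD : 0 < D) (α : ℝ) (hα : 0 < α) :
    ∑ m ∈ D.divisors, ∑ n ∈ D.divisors,
        ((Nat.gcd m n : ℝ) / (Nat.lcm m n : ℝ)) ^ α =
      (D.divisors.card : ℝ) *
        ∏ p ∈ D.primeFactors,
          (1 + (2 * (D.factorization p : ℝ)) /
              ((1 + (D.factorization p : ℝ)) * (p : ℝ) ^ α) *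
            ∑ k ∈ Finset.range (D.factorization p),
              (1 - (k : ℝ) / (D.factorization p : ℝ)) / (p : ℝ) ^ ((k : ℝ) * α)) := by
  have hmf := Nat.multiplicative_factorization (Fgl α)
    (fun x y h => Fgl_mult α x y h) (Fgl_one α) hD.ne'
  have hF : (∑ m ∈ D.divisors, ∑ n ∈ D.divisors,
      ((Nat.gcd m n : ℝ) / (Nat.lcm m n : ℝ)) ^ α) = Fgl α D := rfl
  rw [hF, hmf, Finsupp.prod, Nat.support_factorization]
  have hcard : (D.divisors.card : ℝ)
      = ∏ p ∈ D.primeFactors, ((D.factorization p : ℝ) + 1) := by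
    rw [Nat.card_divisors hD.ne']
    push_cast
    rfl
  rw [hcard, ← Finset.prod_mul_distrib]
  refine Finset.prod_congr rfl fun p hp => ?_
  have hpp := Nat.prime_of_mem_primeFactors hp
  rw [Fgl_prime_pow hpp, rhs_eq' hpp]
end

section
/- Let D be a squarefree positive integer. Then \exp\left(\sum_{p \mid D} p^{-1/2}\right) \prod_{p \mid D} (1 + 1/(2p))^{-1} \le S(\mathcal{T}_D)/\tau(D) \le \exp\left(\sum_{p \mid D} p^{-1/2}\right), where S(\mathcal{T}_D) = \sum_{m,n \mid D} \sqrt{\gcd(m,n)/\mathrm{lcm}(m,n)} and \tau(D) is the number of divisors of D. -/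
open Finset

lemma coprime_prods {S T : Finset ℕ} (hS : ∀ p ∈ S, p.Prime) (hT : ∀ p ∈ T, p.Prime)
    (hd : Disjoint S T) : Nat.Coprime (∏ p ∈ S, p) (∏ p ∈ T, p) := by
  rw [Nat.coprime_prod_left_iff]
  intro p hp
  rw [Nat.coprime_prod_right_iff]
  intro q hq
  rw [Nat.coprime_primes (hS p hp) (hT q hq)]
  exact fun h => (Finset.disjoint_left.mp hd hp) (h ▸ hq)

lemma prod_pos_nat {S : Finset ℕ} (hS : ∀ p ∈ S, p.Prime) : 0 < ∏ p ∈ S, p :=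
  Finset.prod_pos fun p hp => (hS p hp).pos

lemma gcd_prods {S T : Finset ℕ} (hS : ∀ p ∈ S, p.Prime) (hT : ∀ p ∈ T, p.Prime) :
    Nat.gcd (∏ p ∈ S, p) (∏ p ∈ T, p) = ∏ p ∈ S ∩ T, p := by
  rw [← Finset.prod_inter_mul_prod_diff S T (fun p => p),
    ← Finset.prod_inter_mul_prod_diff T S (fun p => p), Finset.inter_comm T S,
    Nat.gcd_mul_left]
  have : Nat.Coprime (∏ p ∈ S \ T, p) (∏ p ∈ T \ S, p) := by
    refine coprime_prods (fun p hp => hS p (Finset.mem_sdiff.mp hp).1)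
      (fun p hp => hT p (Finset.mem_sdiff.mp hp).1) ?_
    rw [Finset.disjoint_left]
    intro a ha hb
    exact (Finset.mem_sdiff.mp hb).2 (Finset.mem_sdiff.mp ha).1
  rw [this, mul_one]

lemma lcm_prods {S T : Finset ℕ} (hS : ∀ p ∈ S, p.Prime) (hT : ∀ p ∈ T, p.Prime) :
    Nat.lcm (∏ p ∈ S, p) (∏ p ∈ T, p) =
      (∏ p ∈ S ∩ T, p) * ((∏ p ∈ S \ T, p) * ∏ p ∈ T \ S, p) := by
  have hpos : 0 < ∏ p ∈ S ∩ T, p :=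
    prod_pos_nat fun p hp => hS p (Finset.mem_inter.mp hp).1
  apply Nat.eq_of_mul_eq_mul_left hpos
  have hg := Nat.gcd_mul_lcm (∏ p ∈ S, p) (∏ p ∈ T, p)
  rw [gcd_prods hS hT] at hg
  rw [hg, ← Finset.prod_inter_mul_prod_diff S T (fun p => p),
    ← Finset.prod_inter_mul_prod_diff T S (fun p => p), Finset.inter_comm T S]
  ring

lemma prod_symmDiff_eq {S T : Finset ℕ} :
    (∏ p ∈ symmDiff S T, p) = (∏ p ∈ S \ T, p) * ∏ p ∈ T \ S, p := by
  rw [symmDiff_def, Finset.sup_eq_union, Finset.prod_union]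
  rw [Finset.disjoint_left]
  intro a ha hb
  exact (Finset.mem_sdiff.mp hb).2 (Finset.mem_sdiff.mp ha).1

lemma term_eq {S T : Finset ℕ} (hS : ∀ p ∈ S, p.Prime) (hT : ∀ p ∈ T, p.Prime) :
    Real.sqrt ((Nat.gcd (∏ p ∈ S, p) (∏ p ∈ T, p) : ℝ) /
        (Nat.lcm (∏ p ∈ S, p) (∏ p ∈ T, p) : ℝ)) =
      ∏ p ∈ symmDiff S T, (p : ℝ) ^ (-(1 / 2 : ℝ)) := by
  have hprime : ∀ p ∈ symmDiff S T, p.Prime := by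
    intro p hp
    rcases Finset.mem_union.mp (Finset.mem_symmDiff.mp hp |>.elim
        (fun h => Finset.mem_union_left _ h.1) fun h => Finset.mem_union_right _ h.1 :
        p ∈ S ∪ T) with h | h
    · exact hS p h
    · exact hT p h
  rw [gcd_prods hS hT, lcm_prods hS hT, ← prod_symmDiff_eq]
  have hpos : (0:ℝ) < ∏ p ∈ S ∩ T, p :=
    Nat.cast_pos.mpr (prod_pos_nat fun p hp => hS p (Finset.mem_inter.mp hp).1)
  have hpos2 : (0:ℝ) < ∏ p ∈ symmDiff S T, p :=
    Nat.cast_pos.mpr (prod_pos_nat hprime)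
  push_cast
  have hposA : (0:ℝ) < ∏ i ∈ S ∩ T, (i:ℝ) :=
    Finset.prod_pos fun i hi => Nat.cast_pos.mpr (hS i (Finset.mem_inter.mp hi).1).pos
  have hposU : (0:ℝ) < ∏ i ∈ symmDiff S T, (i:ℝ) :=
    Finset.prod_pos fun i hi => Nat.cast_pos.mpr (hprime i hi).pos
  have harg : (∏ i ∈ S ∩ T, (i:ℝ)) / ((∏ i ∈ S ∩ T, (i:ℝ)) * ∏ i ∈ symmDiff S T, (i:ℝ))
      = (∏ i ∈ symmDiff S T, (i:ℝ))⁻¹ := by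
    field_simp
  rw [harg]
  have hrp : ∏ p ∈ symmDiff S T, (p : ℝ) ^ (-(1/2 : ℝ)) =
      (∏ p ∈ symmDiff S T, (p : ℝ)) ^ (-(1/2 : ℝ)) :=
    Real.finset_prod_rpow _ _ (fun i _ => Nat.cast_nonneg i) _
  rw [hrp, Real.rpow_neg (le_of_lt hposU), ← Real.sqrt_eq_rpow, Real.sqrt_inv]

lemma galSum_squarefree (D : ℕ) (hD : Squarefree D) :
    galSum D.divisors = 2 ^ D.primeFactors.card *
      ∏ p ∈ D.primeFactors, ((p : ℝ) ^ (-(1 / 2 : ℝ)) + 1) := by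
  classical
  have hD0 : D ≠ 0 := hD.ne_zero
  set P := D.primeFactors with hP
  have hprime : ∀ p ∈ P, p.Prime := fun p hp => Nat.prime_of_mem_primeFactors hp
  have hsub : ∀ S ∈ P.powerset, ∀ p ∈ S, p.Prime := fun S hS p hp =>
    hprime p (Finset.mem_powerset.mp hS hp)
  -- bijection between divisors and powerset
  have hdiv : ∀ f : ℕ → ℝ, ∑ m ∈ D.divisors, f m = ∑ S ∈ P.powerset, f (∏ p ∈ S, p) := by
    intro f
    refine Finset.sum_nbij' (fun m => m.primeFactors) (fun S => ∏ p ∈ S, p) ?_ ?_ ?_ ?_ ?_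
    · intro m hm
      rw [Finset.mem_powerset]
      exact Nat.primeFactors_mono (Nat.mem_divisors.mp hm).1 hD0
    · intro S hS
      rw [Nat.mem_divisors]
      refine ⟨?_, hD0⟩
      calc (∏ p ∈ S, p) ∣ ∏ p ∈ P, p :=
            Finset.prod_dvd_prod_of_subset _ _ _ (Finset.mem_powerset.mp hS)
        _ = D := Nat.prod_primeFactors_of_squarefree hD
    · intro m hm
      exact Nat.prod_primeFactors_of_squarefree
        (hD.squarefree_of_dvd (Nat.mem_divisors.mp hm).1)
    · intro S hS
      exact Nat.primeFactors_prod (hsub S hS)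
    · intro m hm
      rw [Nat.prod_primeFactors_of_squarefree
        (hD.squarefree_of_dvd (Nat.mem_divisors.mp hm).1)]
  unfold galSum
  rw [hdiv]
  have step : ∀ S ∈ P.powerset,
      (∑ n ∈ D.divisors, Real.sqrt ((Nat.gcd (∏ p ∈ S, p) n : ℝ) / (Nat.lcm (∏ p ∈ S, p) n : ℝ)))
        = ∏ p ∈ P, ((p:ℝ) ^ (-(1/2 : ℝ)) + 1) := by
    intro S hS
    rw [hdiv]
    have reindex : ∑ T ∈ P.powerset,
        Real.sqrt ((Nat.gcd (∏ p ∈ S, p) (∏ p ∈ T, p) : ℝ) /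
          (Nat.lcm (∏ p ∈ S, p) (∏ p ∈ T, p) : ℝ)) =
        ∑ U ∈ P.powerset, ∏ p ∈ U, (p : ℝ) ^ (-(1/2 : ℝ)) := by
      refine Finset.sum_nbij' (fun T => symmDiff S T) (fun U => symmDiff S U) ?_ ?_ ?_ ?_ ?_
      · intro T hT
        rw [Finset.mem_powerset]
        intro p hp
        rcases Finset.mem_symmDiff.mp hp with h | h
        · exact Finset.mem_powerset.mp hS h.1
        · exact Finset.mem_powerset.mp hT h.1
      · intro U hU
        rw [Finset.mem_powerset]
        intro p hp
        rcases Finset.mem_symmDiff.mp hp with h | h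
        · exact Finset.mem_powerset.mp hS h.1
        · exact Finset.mem_powerset.mp hU h.1
      · intro T _
        exact symmDiff_symmDiff_cancel_left S T
      · intro U _
        exact symmDiff_symmDiff_cancel_left S U
      · intro T hT
        exact term_eq (hsub S hS) (hsub T hT)
    rw [reindex]
    rw [Finset.prod_add (fun p : ℕ => (p:ℝ) ^ (-(1/2:ℝ))) (fun _ => (1:ℝ)) P]
    simp
  rw [Finset.sum_congr rfl step, Finset.sum_const, Finset.card_powerset, nsmul_eq_mul]
  push_cast
  ring

lemma card_divisors_squarefree (D : ℕ) (hD : Squarefree D) :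
    D.divisors.card = 2 ^ D.primeFactors.card := by
  rw [Nat.card_divisors hD.ne_zero, ← Finset.prod_const]
  refine Finset.prod_congr rfl fun p hp => ?_
  rw [(Nat.squarefree_iff_factorization_le_one hD.ne_zero).mp hD p |>.antisymm
    ((Nat.Prime.factorization_pos_of_dvd (Nat.prime_of_mem_primeFactors hp) hD.ne_zero
      (Nat.dvd_of_mem_primeFactors hp)))]

lemma exp_per_prime {x : ℝ} (hx0 : 0 ≤ x) (hx1 : x ≤ 1) :
    Real.exp x ≤ (1 + x) * (1 + x * x / 2) := by
  have h := Real.exp_bound' hx0 hx1 (n := 3) (by norm_num)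
  have hsum : (∑ m ∈ Finset.range 3, x ^ m / m.factorial) = 1 + x + x ^ 2 / 2 := by
    simp only [Finset.sum_range_succ, Finset.sum_range_zero, Nat.factorial]
    push_cast
    ring
  rw [hsum] at h
  norm_num [Nat.factorial] at h
  nlinarith [pow_nonneg hx0 3, pow_nonneg hx0 2, sq_nonneg x]

theorem stmt_11 (D : ℕ) (hD : Squarefree D) :
    Real.exp (∑ p ∈ D.primeFactors, (p : ℝ) ^ (-(1 / 2 : ℝ))) *
        ∏ p ∈ D.primeFactors, (1 + 1 / (2 * (p : ℝ)))⁻¹ ≤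
      galSum D.divisors / (D.divisors.card : ℝ) ∧
    galSum D.divisors / (D.divisors.card : ℝ) ≤
      Real.exp (∑ p ∈ D.primeFactors, (p : ℝ) ^ (-(1 / 2 : ℝ))) := by
  have hq : galSum D.divisors / (D.divisors.card : ℝ) =
      ∏ p ∈ D.primeFactors, (1 + (p : ℝ) ^ (-(1 / 2 : ℝ))) := by
    rw [galSum_squarefree D hD, card_divisors_squarefree D hD]
    have h2 : ((2:ℝ) ^ D.primeFactors.card) ≠ 0 := by positivity
    push_cast
    rw [mul_comm ((2:ℝ) ^ D.primeFactors.card) _, mul_div_assoc, div_self h2, mul_one]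
    exact Finset.prod_congr rfl fun p _ => by ring
  -- basic facts about x p for primes p
  have hfacts : ∀ p ∈ D.primeFactors, 0 < (p:ℝ) ^ (-(1/2:ℝ)) ∧ (p:ℝ) ^ (-(1/2:ℝ)) ≤ 1 ∧
      (p:ℝ) ^ (-(1/2:ℝ)) * (p:ℝ) ^ (-(1/2:ℝ)) = 1 / p := by
    intro p hp
    have hp2 : 2 ≤ p := (Nat.prime_of_mem_primeFactors hp).two_le
    have hp0 : (0:ℝ) < p := by positivity
    have hp1 : (1:ℝ) ≤ p := by exact_mod_cast le_trans one_le_two hp2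
    refine ⟨Real.rpow_pos_of_pos hp0 _, ?_, ?_⟩
    · calc (p:ℝ) ^ (-(1/2:ℝ)) ≤ (p:ℝ) ^ (0:ℝ) :=
            Real.rpow_le_rpow_of_exponent_le hp1 (by norm_num)
        _ = 1 := Real.rpow_zero _
    · rw [← Real.rpow_add hp0]
      norm_num [Real.rpow_neg_one]
  constructor
  · -- lower bound
    rw [hq, Real.exp_sum, ← Finset.prod_mul_distrib]
    refine Finset.prod_le_prod ?_ ?_
    · intro p hp
      have h := hfacts p hp
      have hp0 : (0:ℝ) < p := by
        have := (Nat.prime_of_mem_primeFactors hp).pos; positivity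
      positivity
    · intro p hp
      obtain ⟨h0, h1, hsq⟩ := hfacts p hp
      have hp0 : (0:ℝ) < p := by
        have := (Nat.prime_of_mem_primeFactors hp).pos; positivity
      have hb : (0:ℝ) < 1 + 1 / (2 * p) := by positivity
      rw [← div_eq_mul_inv, div_le_iff₀ hb]
      calc Real.exp ((p:ℝ) ^ (-(1/2:ℝ))) ≤
            (1 + (p:ℝ) ^ (-(1/2:ℝ))) * (1 + (p:ℝ)^(-(1/2:ℝ)) * (p:ℝ)^(-(1/2:ℝ)) / 2) :=
            exp_per_prime h0.le h1
        _ = (1 + (p:ℝ) ^ (-(1/2:ℝ))) * (1 + 1 / (2 * p)) := by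
            rw [hsq]; ring
  · -- upper bound
    rw [hq, Real.exp_sum]
    refine Finset.prod_le_prod ?_ ?_
    · intro p hp
      have h := (hfacts p hp).1
      positivity
    · intro p hp
      have := Real.add_one_le_exp ((p:ℝ) ^ (-(1/2:ℝ)))
      linarith
end

section
/- Let \mathcal{M} be a finite set of N positive integers, all of whose prime factors are at most the N-th prime p_N, and let c \in \mathbb{C}^{\mathcal{M}} with \sum_{m} |c_m|^2 = 1. Define s_d := \sum_{m \in \mathcal{M}, \, d \mid m} c_m \sqrt{d/m} for d \in \mathcal{M}, and \Lambda := \sum_{d \in \mathcal{M}} c_d \overline{s_d}. Then |\Lambda|^2 \le \sum_{m,n \in \mathcal{M}} |c_m c_n| \frac{\sigma(\gcd(m,n))}{\sqrt{mn}}, where \sigma is the sum-of-divisors function. -/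
open Finset

theorem stmt_15 (N : ℕ) (M : Finset ℕ) (hcard : M.card = N)
    (hpos : ∀ m ∈ M, 0 < m)
    (hfac : ∀ m ∈ M, ∀ p ∈ m.primeFactors, p ≤ Nat.nth Nat.Prime (N - 1))
    (c : ℕ → ℂ) (hc : ∑ m ∈ M, ‖c m‖ ^ 2 = 1)
    (s : ℕ → ℂ)
    (hs : ∀ d, s d = ∑ m ∈ M.filter (d ∣ ·), c m * (Real.sqrt ((d : ℝ) / (m : ℝ)) : ℝ))
    (Λ : ℂ) (hΛ : Λ = ∑ d ∈ M, c d * starRingEnd ℂ (s d)) :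
    ‖Λ‖ ^ 2 ≤ ∑ m ∈ M, ∑ n ∈ M,
      ‖c m‖ * ‖c n‖ * ((∑ d ∈ (Nat.gcd m n).divisors, d : ℕ) : ℝ) /
        Real.sqrt ((m : ℝ) * (n : ℝ)) := by
  have hΛle : ‖Λ‖ ≤ ∑ d ∈ M, ‖c d‖ * ‖s d‖ := by
    rw [hΛ]
    refine (norm_sum_le _ _).trans_eq ?_
    refine Finset.sum_congr rfl fun d _ => ?_
    rw [norm_mul, RCLike.norm_conj]
  have h1 : ‖Λ‖ ^ 2 ≤ ∑ d ∈ M, ‖s d‖ ^ 2 := by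
    calc ‖Λ‖ ^ 2 ≤ (∑ d ∈ M, ‖c d‖ * ‖s d‖) ^ 2 :=
          pow_le_pow_left₀ (norm_nonneg _) hΛle 2
      _ ≤ (∑ d ∈ M, ‖c d‖ ^ 2) * ∑ d ∈ M, ‖s d‖ ^ 2 :=
          Finset.sum_mul_sq_le_sq_mul_sq _ _ _
      _ = ∑ d ∈ M, ‖s d‖ ^ 2 := by rw [hc, one_mul]
  have h2 : ∀ d, ‖s d‖ ≤ ∑ m ∈ M, (if d ∣ m then ‖c m‖ * Real.sqrt ((d:ℝ) / m) else 0) := by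
    intro d
    rw [hs, ← Finset.sum_filter]
    refine (norm_sum_le _ _).trans_eq ?_
    refine Finset.sum_congr rfl fun m _ => ?_
    rw [norm_mul, Complex.norm_real, Real.norm_eq_abs, abs_of_nonneg (Real.sqrt_nonneg _)]
  have h3 : ∑ d ∈ M, ‖s d‖ ^ 2 ≤
      ∑ d ∈ M, (∑ m ∈ M, (if d ∣ m then ‖c m‖ * Real.sqrt ((d:ℝ) / m) else 0)) ^ 2 := by
    refine Finset.sum_le_sum fun d _ => pow_le_pow_left₀ (norm_nonneg _) (h2 d) 2
  refine h1.trans (h3.trans ?_)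
  have hexp : ∀ d ∈ M, (∑ m ∈ M, (if d ∣ m then ‖c m‖ * Real.sqrt ((d:ℝ) / m) else 0)) ^ 2
      = ∑ m ∈ M, ∑ n ∈ M, (if d ∣ m then ‖c m‖ * Real.sqrt ((d:ℝ) / m) else 0) *
        (if d ∣ n then ‖c n‖ * Real.sqrt ((d:ℝ) / n) else 0) := by
    intro d _
    rw [sq, Finset.sum_mul_sum]
  rw [Finset.sum_congr rfl hexp, Finset.sum_comm]
  refine Finset.sum_le_sum fun m hm => ?_
  rw [Finset.sum_comm]
  refine Finset.sum_le_sum fun n hn => ?_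
  have hm0 : (0:ℝ) < m := by exact_mod_cast hpos m hm
  have hn0 : (0:ℝ) < n := by exact_mod_cast hpos n hn
  have hstep : ∀ d ∈ M,
      (if d ∣ m then ‖c m‖ * Real.sqrt ((d:ℝ) / m) else 0) *
        (if d ∣ n then ‖c n‖ * Real.sqrt ((d:ℝ) / n) else 0)
      = if d ∣ m ∧ d ∣ n then (d:ℝ) * (‖c m‖ * ‖c n‖ / Real.sqrt ((m:ℝ) * n)) else 0 := by
    intro d _
    by_cases h1 : d ∣ m <;> by_cases h2 : d ∣ n <;>
      simp only [h1, h2, if_true, if_false, and_true, and_false, true_and, false_and,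
        mul_zero, zero_mul, if_true, if_false]
    have key : Real.sqrt ((d:ℝ)/m) * Real.sqrt ((d:ℝ)/n) = (d:ℝ) / Real.sqrt ((m:ℝ)*n) := by
      rw [← Real.sqrt_mul (by positivity), show (d:ℝ)/m * ((d:ℝ)/n) = (d:ℝ)*(d:ℝ)/((m:ℝ)*n) by ring,
        Real.sqrt_div (by positivity), Real.sqrt_mul_self (by positivity)]
    calc ‖c m‖ * Real.sqrt ((d:ℝ)/m) * (‖c n‖ * Real.sqrt ((d:ℝ)/n))
        = ‖c m‖ * ‖c n‖ * (Real.sqrt ((d:ℝ)/m) * Real.sqrt ((d:ℝ)/n)) := by ring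
      _ = ‖c m‖ * ‖c n‖ * ((d:ℝ) / Real.sqrt ((m:ℝ)*n)) := by rw [key]
      _ = (d:ℝ) * (‖c m‖ * ‖c n‖ / Real.sqrt ((m:ℝ)*n)) := by ring
  rw [Finset.sum_congr rfl hstep, ← Finset.sum_filter, ← Finset.sum_mul]
  have hsub : M.filter (fun d => d ∣ m ∧ d ∣ n) ⊆ (Nat.gcd m n).divisors := by
    intro d hd
    simp only [Finset.mem_filter] at hd
    rw [Nat.mem_divisors]
    exact ⟨Nat.dvd_gcd hd.2.1 hd.2.2, Nat.gcd_ne_zero_left (hpos m hm).ne'⟩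
  have hK : (0:ℝ) ≤ ‖c m‖ * ‖c n‖ / Real.sqrt ((m:ℝ)*n) := by positivity
  have hsum : ∑ d ∈ M.filter (fun d => d ∣ m ∧ d ∣ n), (d:ℝ)
      ≤ ((∑ d ∈ (Nat.gcd m n).divisors, d : ℕ) : ℝ) := by
    push_cast
    exact Finset.sum_le_sum_of_subset_of_nonneg hsub (fun i _ _ => by positivity)
  calc (∑ d ∈ M.filter (fun d => d ∣ m ∧ d ∣ n), (d:ℝ)) * (‖c m‖ * ‖c n‖ / Real.sqrt ((m:ℝ)*n))
      ≤ ((∑ d ∈ (Nat.gcd m n).divisors, d : ℕ) : ℝ) * (‖c m‖ * ‖c n‖ / Real.sqrt ((m:ℝ)*n)) :=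
        mul_le_mul_of_nonneg_right hsum hK
    _ = ‖c m‖ * ‖c n‖ * ((∑ d ∈ (Nat.gcd m n).divisors, d : ℕ) : ℝ) / Real.sqrt ((m:ℝ)*n) := by
        ring
end
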